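/- Let n ≥ 2 and let x ∈ ℝ^n satisfy x_i ≥ 0 for all i, ∑_i x_i > 1, and ∑_i x_i ≤ 1 + x_j for every j ∈ [n]. Then x lies in the convex hull of the n+1 points e_1, …, e_n and 𝟙/(n-1), where 𝟙 = (1,…,1); that is, x lies in the peak attached to the facet of the cross polytope in the positive orthant. -/

import Mathlib

open Set

theorem mem_positive_peak (n : ℕ) (hn : 2 ≤ n) (x : Fin n → ℝ)
    (hx0 : ∀ i, 0 ≤ x i) (hxsum : 1 < ∑ i, x i)
    (hxj : ∀ j, ∑ i, x i ≤ 1 + x j) :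
    x ∈ convexHull ℝ
      ((Set.range fun i : Fin n => Pi.single i (1 : ℝ)) ∪
        {fun _ : Fin n => ((n : ℝ) - 1)⁻¹}) := by
  have hnpos : (0:ℝ) < (n:ℝ) - 1 := by
    have : (2:ℝ) ≤ n := by exact_mod_cast hn
    linarith
  set S := ∑ i, x i with hS
  set w : Option (Fin n) → ℝ :=
    fun o => o.elim ((S - 1) * ((n:ℝ) - 1)) (fun i => x i - (S - 1)) with hw_def
  set z : Option (Fin n) → (Fin n → ℝ) :=
    fun o => o.elim (fun _ => ((n:ℝ) - 1)⁻¹) (fun i => Pi.single i 1) with hz_def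
  have hw : ∀ o ∈ (Finset.univ : Finset (Option (Fin n))), 0 ≤ w o := by
    rintro (_ | i) _
    · exact mul_nonneg (by linarith) (by linarith)
    · have := hxj i
      simp only [hw_def, Option.elim]
      linarith
  have hsum : ∑ o : Option (Fin n), w o = 1 := by
    rw [Fintype.sum_option]
    simp only [hw_def, Option.elim, Finset.sum_sub_distrib, Finset.sum_const,
      Finset.card_univ, Fintype.card_fin, nsmul_eq_mul, ← hS]
    ring
  have hz : ∀ o ∈ (Finset.univ : Finset (Option (Fin n))), z o ∈
      ((Set.range fun i : Fin n => Pi.single i (1 : ℝ)) ∪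
        {fun _ : Fin n => ((n : ℝ) - 1)⁻¹}) := by
    rintro (_ | i) _
    · exact Or.inr rfl
    · exact Or.inl ⟨i, rfl⟩
  have hmem := Finset.centerMass_mem_convexHull (Finset.univ) hw
    (by rw [hsum]; norm_num) hz
  have hcm : Finset.univ.centerMass w z = x := by
    rw [Finset.centerMass, hsum, inv_one, one_smul]
    funext j
    rw [Fintype.sum_option]
    simp only [hz_def, hw_def, Option.elim, Pi.add_apply, Pi.smul_apply,
      smul_eq_mul, Finset.sum_apply]
    have h1 : ∑ i : Fin n, (x i - (S - 1)) * (Pi.single i (1:ℝ) : Fin n → ℝ) j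
        = x j - (S - 1) := by
      rw [Finset.sum_eq_single j]
      · simp
      · intro b _ hb
        simp [Pi.single_apply, hb]
      · simp
    rw [h1]
    field_simp
    ring
  rwa [hcm] at hmem
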